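/- Let n be a natural number and let B : ℝⁿ × ℝⁿ → ℝⁿ be a symmetric bilinear map satisfying the cancellation condition ⟨B(y,y), y⟩ = 0 for all y ∈ ℝⁿ, where ⟨,⟩ is the Euclidean inner product. Then for every initial datum y₀ ∈ ℝⁿ there exists a differentiable function y : ℝ → ℝⁿ defined for all time, with y(0) = y₀ and y'(t) = B(y(t), y(t)) for all t ∈ ℝ. -/

import Mathlib

open RealInnerProductSpace

open Set in
set_option maxHeartbeats 1000000 in
/-- If `B` is a symmetric bilinear map on Euclidean `ℝⁿ` obeying the
cancellation condition `⟨B(y,y), y⟩ = 0`, then for every initial datum `y₀` there is a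
globally defined solution `y : ℝ → ℝⁿ` of `y' = B(y, y)` with `y(0) = y₀`. -/
theorem stmt_4 (n : ℕ)
    (B : EuclideanSpace ℝ (Fin n) →ₗ[ℝ] EuclideanSpace ℝ (Fin n) →ₗ[ℝ] EuclideanSpace ℝ (Fin n))
    (hBsymm : ∀ y z, B y z = B z y)
    (hcancel : ∀ y, ⟪B y y, y⟫ = 0)
    (y₀ : EuclideanSpace ℝ (Fin n)) :
    ∃ y : ℝ → EuclideanSpace ℝ (Fin n),
      y 0 = y₀ ∧ ∀ t : ℝ, HasDerivAt y (B (y t) (y t)) t := by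
  classical
  let E : Type := EuclideanSpace ℝ (Fin n)
  set R : ℝ := ‖y₀‖ with hRdef
  have hR0 : 0 ≤ R := norm_nonneg _
  -- a continuous bilinear version of B, to get operator norm bounds
  let B₁ : E →ₗ[ℝ] (E →L[ℝ] E) :=
    (LinearMap.toContinuousLinearMap :
      (E →ₗ[ℝ] E) ≃ₗ[ℝ] (E →L[ℝ] E)).toLinearMap.comp B
  let B₂ : E →L[ℝ] (E →L[ℝ] E) := LinearMap.toContinuousLinearMap B₁
  set M : ℝ := ‖B₂‖ with hMdef
  have hM0 : 0 ≤ M := hMdef ▸ ContinuousLinearMap.opNorm_nonneg B₂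
  have hB₂ : ∀ u v : E, B₂ u v = B u v := fun u v => rfl
  have hBle : ∀ u v : E, ‖B u v‖ ≤ M * ‖u‖ * ‖v‖ := by
    intro u v
    calc ‖B u v‖ = ‖B₂ u v‖ := by rw [hB₂]
    _ ≤ ‖B₂ u‖ * ‖v‖ := (B₂ u).le_opNorm v
    _ ≤ (M * ‖u‖) * ‖v‖ := by
        gcongr
        exact B₂.le_opNorm u
  -- radial retraction onto the closed ball of radius R
  set P : E → E := fun x => if ‖x‖ ≤ R then x else (R / ‖x‖) • x with hPdef
  have hPnorm : ∀ x, ‖P x‖ ≤ R := by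
    intro x
    by_cases h : ‖x‖ ≤ R
    · simp [hPdef, h]
    · push_neg at h
      have hx0 : 0 < ‖x‖ := lt_of_le_of_lt hR0 h
      rw [hPdef]
      simp only [if_neg (not_le.mpr h)]
      rw [norm_smul, Real.norm_eq_abs, abs_of_nonneg (div_nonneg hR0 hx0.le),
        div_mul_cancel₀ _ hx0.ne']
  have hPid : ∀ x : E, ‖x‖ ≤ R → P x = x := by
    intro x h; simp [hPdef, h]
  have hPsmul : ∀ x : E, ∃ c : ℝ, P x = c • x := by
    intro x
    by_cases h : ‖x‖ ≤ R
    · exact ⟨1, by simp [hPdef, h]⟩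
    · exact ⟨R / ‖x‖, by simp [hPdef, h]⟩
  -- the retraction is 2-Lipschitz
  have hmix : ∀ x y : E, ‖x‖ ≤ R → ¬ ‖y‖ ≤ R → ‖P x - P y‖ ≤ 2 * ‖x - y‖ := by
    intro x y hx hy
    push_neg at hy
    have hy0 : 0 < ‖y‖ := lt_of_le_of_lt hR0 hy
    rw [hPid x hx, hPdef]
    simp only [if_neg (not_le.mpr hy)]
    have h1 : ‖y - (R / ‖y‖) • y‖ = ‖y‖ - R := by
      have : y - (R / ‖y‖) • y = (1 - R / ‖y‖) • y := by
        rw [sub_smul, one_smul]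
      rw [this, norm_smul, Real.norm_eq_abs,
        abs_of_nonneg (by rw [sub_nonneg]; exact (div_le_one hy0).mpr hy.le),
        sub_mul, one_mul, div_mul_cancel₀ _ hy0.ne']
    calc ‖x - (R / ‖y‖) • y‖ ≤ ‖x - y‖ + ‖y - (R / ‖y‖) • y‖ := by
          have := norm_sub_le_norm_sub_add_norm_sub x y ((R / ‖y‖) • y)
          linarith [norm_sub_le (x - y) ((R / ‖y‖) • y - y)]
    _ = ‖x - y‖ + (‖y‖ - R) := by rw [h1]
    _ ≤ ‖x - y‖ + (‖y‖ - ‖x‖) := by linarith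
    _ ≤ ‖x - y‖ + ‖x - y‖ := by
        have := norm_sub_norm_le (y) (x)
        rw [norm_sub_rev] at this ⊢
        linarith [norm_sub_norm_le y x]
    _ = 2 * ‖x - y‖ := by ring
  have hPlip : ∀ x y : E, ‖P x - P y‖ ≤ 2 * ‖x - y‖ := by
    intro x y
    by_cases hx : ‖x‖ ≤ R <;> by_cases hy : ‖y‖ ≤ R
    · rw [hPid x hx, hPid y hy]; linarith [norm_nonneg (x - y)]
    · exact hmix x y hx hy
    · rw [norm_sub_rev, norm_sub_rev x y]; exact hmix y x hy hx
    · push_neg at hx hy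
      have hx0 : 0 < ‖x‖ := lt_of_le_of_lt hR0 hx
      have hy0 : 0 < ‖y‖ := lt_of_le_of_lt hR0 hy
      rw [hPdef]
      simp only [if_neg (not_le.mpr hx), if_neg (not_le.mpr hy)]
      have key : (R / ‖x‖) • x - (R / ‖y‖) • y
          = (R / ‖x‖) • (x - y) + (R / ‖x‖ - R / ‖y‖) • y := by
        rw [smul_sub, sub_smul]; abel
      have h1 : ‖(R / ‖x‖) • (x - y)‖ ≤ ‖x - y‖ := by
        rw [norm_smul, Real.norm_eq_abs, abs_of_nonneg (div_nonneg hR0 hx0.le)]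
        have : R / ‖x‖ ≤ 1 := (div_le_one hx0).mpr hx.le
        nlinarith [norm_nonneg (x - y)]
      have h2 : ‖(R / ‖x‖ - R / ‖y‖) • y‖ ≤ ‖x - y‖ := by
        rw [norm_smul, Real.norm_eq_abs]
        have hef : R / ‖x‖ - R / ‖y‖ = R * (‖y‖ - ‖x‖) / (‖x‖ * ‖y‖) := by
          field_simp
        rw [hef, abs_div, abs_mul, abs_of_nonneg hR0,
          abs_of_nonneg (by positivity : (0:ℝ) ≤ ‖x‖ * ‖y‖)]
        have habs : |‖y‖ - ‖x‖| ≤ ‖x - y‖ := by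
          rw [norm_sub_rev]; exact abs_norm_sub_norm_le y x
        have hRx : R / ‖x‖ ≤ 1 := (div_le_one hx0).mpr hx.le
        calc R * |‖y‖ - ‖x‖| / (‖x‖ * ‖y‖) * ‖y‖
            = (R / ‖x‖) * |‖y‖ - ‖x‖| := by field_simp
        _ ≤ 1 * ‖x - y‖ := by
            apply mul_le_mul hRx habs (abs_nonneg _) zero_le_one
        _ = ‖x - y‖ := one_mul _
      calc ‖(R / ‖x‖) • x - (R / ‖y‖) • y‖
          ≤ ‖(R / ‖x‖) • (x - y)‖ + ‖(R / ‖x‖ - R / ‖y‖) • y‖ := by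
            rw [key]; exact norm_add_le _ _
      _ ≤ ‖x - y‖ + ‖x - y‖ := add_le_add h1 h2
      _ = 2 * ‖x - y‖ := by ring
  -- truncated vector field
  set F : E → E := fun x => B (P x) (P x) with hFdef
  have hcancelF : ∀ x : E, ⟪F x, x⟫ = 0 := by
    intro x
    obtain ⟨c, hc⟩ := hPsmul x
    rw [hFdef]
    simp only [hc, map_smul, LinearMap.smul_apply, inner_smul_left]
    rw [hcancel x]
    simp
  set K : NNReal := (4 * M * R).toNNReal with hKdef
  have hKcoe : (K : ℝ) = 4 * M * R := Real.coe_toNNReal _ (by positivity)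
  have hFlip : LipschitzWith K F := by
    apply LipschitzWith.of_dist_le_mul
    intro x y
    rw [dist_eq_norm, dist_eq_norm, hKcoe]
    have key : F x - F y = B (P x - P y) (P x) + B (P y) (P x - P y) := by
      rw [hFdef]
      simp only [map_sub, LinearMap.sub_apply]
      abel
    have h1 : ‖B (P x - P y) (P x)‖ ≤ M * ‖P x - P y‖ * R := by
      calc ‖B (P x - P y) (P x)‖ ≤ M * ‖P x - P y‖ * ‖P x‖ := hBle _ _
      _ ≤ M * ‖P x - P y‖ * R := by
          apply mul_le_mul_of_nonneg_left (hPnorm x) (by positivity)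
    have h2 : ‖B (P y) (P x - P y)‖ ≤ M * R * ‖P x - P y‖ := by
      calc ‖B (P y) (P x - P y)‖ ≤ M * ‖P y‖ * ‖P x - P y‖ := hBle _ _
      _ ≤ M * R * ‖P x - P y‖ := by
          apply mul_le_mul_of_nonneg_right _ (norm_nonneg _)
          exact mul_le_mul_of_nonneg_left (hPnorm y) hM0
    have h3 := hPlip x y
    calc ‖F x - F y‖ ≤ ‖B (P x - P y) (P x)‖ + ‖B (P y) (P x - P y)‖ := by
          rw [key]; exact norm_add_le _ _
    _ ≤ M * ‖P x - P y‖ * R + M * R * ‖P x - P y‖ := add_le_add h1 h2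
    _ = 2 * M * R * ‖P x - P y‖ := by ring
    _ ≤ 2 * M * R * (2 * ‖x - y‖) := by gcongr
    _ = 4 * M * R * ‖x - y‖ := by ring
  set Cb : ℝ := M * R * R with hCbdef
  have hCb0 : 0 ≤ Cb := by positivity
  have hFbound : ∀ x : E, ‖F x‖ ≤ Cb := by
    intro x
    calc ‖F x‖ ≤ M * ‖P x‖ * ‖P x‖ := hBle _ _
    _ ≤ M * R * R := by gcongr <;> exact hPnorm x
  -- local solutions on larger and larger intervals
  have hsol : ∀ k : ℕ, ∃ y : ℝ → E, y 0 = y₀ ∧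
      ∀ t ∈ Ioo (-((k : ℝ) + 1)) ((k : ℝ) + 1), HasDerivAt y (F (y t)) t := by
    intro k
    set a : ℝ := (k : ℝ) + 2 with hadef
    have ha0 : 0 < a := by positivity
    have hpl : IsPicardLindelof (fun _ x => F x) (tmin := -a) (tmax := a)
        ⟨0, ⟨by linarith, by linarith⟩⟩ y₀ (Cb * a).toNNReal 0 Cb.toNNReal K :=
      IsPicardLindelof.of_time_independent
        (fun x _ => by rw [Real.coe_toNNReal _ hCb0]; exact hFbound x)
        hFlip.lipschitzOnWith
        (by simp [Real.coe_toNNReal _ hCb0, Real.coe_toNNReal _ (by positivity : 0 ≤ Cb * a)])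
    obtain ⟨f, hf0, hf⟩ := hpl.exists_eq_forall_mem_Icc_hasDerivWithinAt₀
    refine ⟨f, hf0, fun t ht => ?_⟩
    have htI : t ∈ Icc (-a) a := ⟨by linarith [ht.1], by linarith [ht.2]⟩
    exact (hf t htI).hasDerivAt (Icc_mem_nhds (by linarith [ht.1]) (by linarith [ht.2]))
  choose Y hY0 hYd using hsol
  -- uniqueness lets pieces agree
  have huniq : ∀ j k : ℕ, ∀ t : ℝ, |t| < (min j k : ℕ) + 1 → Y j t = Y k t := by
    intro j k t ht
    set m : ℕ := min j k with hmdef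
    have hsubj : Ioo (-((m : ℝ) + 1)) ((m : ℝ) + 1) ⊆ Ioo (-((j : ℝ) + 1)) ((j : ℝ) + 1) := by
      apply Ioo_subset_Ioo <;>
        [skip; skip] <;>
        · have : (m : ℝ) ≤ j := by exact_mod_cast Nat.min_le_left j k
          linarith
    have hsubk : Ioo (-((m : ℝ) + 1)) ((m : ℝ) + 1) ⊆ Ioo (-((k : ℝ) + 1)) ((k : ℝ) + 1) := by
      apply Ioo_subset_Ioo <;>
        [skip; skip] <;>
        · have : (m : ℝ) ≤ k := by exact_mod_cast Nat.min_le_right j k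
          linarith
    have h0mem : (0 : ℝ) ∈ Ioo (-((m : ℝ) + 1)) ((m : ℝ) + 1) := by
      constructor <;> [linarith [Nat.cast_nonneg (α := ℝ) m]; linarith [Nat.cast_nonneg (α := ℝ) m]]
    have := ODE_solution_unique_of_mem_Ioo (v := fun _ x => F x)
      (s := fun _ => (univ : Set E)) (K := K)
      (fun _ _ => hFlip.lipschitzOnWith) h0mem
      (fun s hs => ⟨hYd j s (hsubj hs), trivial⟩)
      (fun s hs => ⟨hYd k s (hsubk hs), trivial⟩)
      ((hY0 j).trans (hY0 k).symm)
    exact this (abs_lt.mp ht |> fun h => ⟨h.1, h.2⟩)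
  -- glue
  set y : ℝ → E := fun t => Y ⌊|t|⌋₊ t with hydef
  have hyY : ∀ (k : ℕ) (t : ℝ), |t| < (k : ℝ) + 1 → y t = Y k t := by
    intro k t ht
    apply huniq
    have h1 : (↑(⌊|t|⌋₊ ⊓ k) : ℝ) = min (⌊|t|⌋₊ : ℝ) (k : ℝ) := by push_cast; rfl
    rw [h1, ← min_add_add_right, lt_min_iff]
    exact ⟨Nat.lt_floor_add_one _, ht⟩
  have hy0 : y 0 = y₀ := by
    have : y 0 = Y 0 0 := hyY 0 0 (by norm_num)
    rw [this, hY0]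
  have hy : ∀ t : ℝ, HasDerivAt y (F (y t)) t := by
    intro t
    set k : ℕ := ⌊|t|⌋₊ with hkdef
    have htk : |t| < (k : ℝ) + 1 := Nat.lt_floor_add_one _
    have hmem : t ∈ Ioo (-((k : ℝ) + 1)) ((k : ℝ) + 1) := by
      rcases abs_lt.mp htk with ⟨h1, h2⟩; exact ⟨h1, h2⟩
    have hev : y =ᶠ[nhds t] Y k := by
      filter_upwards [Ioo_mem_nhds hmem.1 hmem.2] with s hs
      exact hyY k s (abs_lt.mpr ⟨hs.1, hs.2⟩)
    have hk : HasDerivAt (Y k) (F (Y k t)) t := hYd k t hmem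
    have := hk.congr_of_eventuallyEq hev
    rwa [← hyY k t htk] at this
  -- conservation of the norm
  have hconst : ∀ t : ℝ, ⟪y t, y t⟫ = ⟪y₀, y₀⟫ := by
    have hg : ∀ t : ℝ, HasDerivAt (fun s => ⟪y s, y s⟫) 0 t := by
      intro t
      have hd := HasDerivAt.inner (𝕜 := ℝ) (hy t) (hy t)
      have h0 : ⟪y t, F (y t)⟫ + ⟪F (y t), y t⟫ = 0 := by
        have h1 := hcancelF (y t)
        have h2 : ⟪y t, F (y t)⟫ = ⟪F (y t), y t⟫ := real_inner_comm _ _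
        linarith
      rwa [h0] at hd
    have hcst := is_const_of_deriv_eq_zero (f := fun s => ⟪y s, y s⟫)
      (fun s => (hg s).differentiableAt) (fun s => (hg s).deriv)
    intro t
    have := hcst t 0
    simpa [hy0] using this
  have hnorm : ∀ t : ℝ, ‖y t‖ ≤ R := by
    intro t
    have h := hconst t
    rw [real_inner_self_eq_norm_mul_norm, real_inner_self_eq_norm_mul_norm] at h
    exact le_of_eq ((mul_self_inj (norm_nonneg _) hR0).mp h)
  refine ⟨y, hy0, fun t => ?_⟩
  have : F (y t) = B (y t) (y t) := by
    rw [hFdef]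
    simp only [hPid (y t) (hnorm t)]
  rw [← this]
  exact hy t
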